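/- arXiv:2405.12678 — 12 statements merged into one kernel-verified Lean document; each statement's English description precedes it below -/
import Mathlib

section
/- Let q be a prime power (q = p^j for a prime p and j ≥ 1) and let n = q^(2^k) for some natural number k ≥ 1. Then there exists a finite family F of q-element subsets of Fin n such that every pair of distinct elements of Fin n is contained in exactly one member of F, and moreover F.card * Nat.choose q 2 = Nat.choose n 2 (so F has exactly (n choose 2)/(q choose 2) members). -/
open Finset

/-- Counting part: a Steiner system `S(2,q,n)` has `n.choose 2 / q.choose 2` blocks. -/
lemma steiner_count {α : Type*} [Fintype α] [DecidableEq α] (F : Finset (Finset α)) (q : ℕ)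
    (hc : ∀ S ∈ F, S.card = q)
    (hu : ∀ a b : α, a ≠ b → ∃! S, S ∈ F ∧ a ∈ S ∧ b ∈ S) :
    F.card * q.choose 2 = (Fintype.card α).choose 2 := by
  have hcover : (Finset.univ : Finset α).offDiag = F.biUnion (fun S => S.offDiag) := by
    ext ⟨a, b⟩
    simp only [mem_offDiag, mem_univ, true_and, mem_biUnion]
    constructor
    · intro hab
      obtain ⟨S, ⟨hS, haS, hbS⟩, -⟩ := hu a b hab
      exact ⟨S, hS, haS, hbS, hab⟩
    · rintro ⟨S, -, -, -, hab⟩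
      exact hab
  have hdisj : ∀ S ∈ F, ∀ T ∈ F, S ≠ T → Disjoint S.offDiag T.offDiag := by
    intro S hS T hT hST
    rw [Finset.disjoint_left]
    rintro ⟨a, b⟩ h1 h2
    rw [mem_offDiag] at h1 h2
    obtain ⟨W, -, huniq⟩ := hu a b h1.2.2
    exact hST ((huniq S ⟨hS, h1.1, h1.2.1⟩).trans (huniq T ⟨hT, h2.1, h2.2.1⟩).symm)
  have hcard : (Fintype.card α) * (Fintype.card α - 1) = F.card * (q * (q - 1)) := by
    have := congrArg Finset.card hcover
    rw [Finset.card_biUnion hdisj] at this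
    rw [Finset.offDiag_card, Finset.card_univ] at this
    rw [Nat.mul_sub_one, Nat.mul_sub_one]
    rw [this, Finset.sum_congr rfl (fun S hS => by rw [Finset.offDiag_card, hc S hS])]
    simp [Finset.sum_const, mul_comm]
  have h2 : ∀ m : ℕ, m * (m - 1) = 2 * m.choose 2 := by
    intro m
    rw [Nat.choose_two_right, Nat.mul_div_cancel']
    · ring_nf
      rcases Nat.even_or_odd m with h | h
      · exact Dvd.dvd.mul_right h.two_dvd _
      · cases m with
        | zero => simp
        | succ m =>
          exact Dvd.dvd.mul_left (Nat.Odd.sub_odd h (by norm_num) |>.two_dvd) _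
  refine Nat.eq_of_mul_eq_mul_left (show 0 < 2 by norm_num) ?_
  calc 2 * (F.card * q.choose 2) = F.card * (2 * q.choose 2) := by ring
    _ = F.card * (q * (q - 1)) := by rw [← h2 q]
    _ = Fintype.card α * (Fintype.card α - 1) := hcard.symm
    _ = 2 * (Fintype.card α).choose 2 := h2 _

/-- Affine lines over a finite field form a Steiner system `S(2, |K|, |V|)`. -/
lemma affine_steiner (K V : Type*) [Field K] [Fintype K] [DecidableEq K]
    [AddCommGroup V] [Module K V] [Fintype V] [DecidableEq V] :
    ∃ F : Finset (Finset V), (∀ S ∈ F, S.card = Fintype.card K) ∧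
      ∀ a b : V, a ≠ b → ∃! S, S ∈ F ∧ a ∈ S ∧ b ∈ S := by
  classical
  set L : V → V → Finset V := fun a d => Finset.image (fun t : K => a + t • d) Finset.univ with hL
  have hinj : ∀ (a d : V), d ≠ 0 → Function.Injective (fun t : K => a + t • d) := by
    intro a d hd t₁ t₂ h
    simp only [add_right_inj] at h
    by_contra hne
    have : (t₁ - t₂) • d = 0 := by rw [sub_smul, h, sub_self]
    have h2 : t₁ - t₂ ≠ 0 := sub_ne_zero.mpr hne
    have := congrArg (fun x => (t₁ - t₂)⁻¹ • x) this
    simp [smul_smul, inv_mul_cancel₀ h2] at this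
    exact hd this
  have hLcard : ∀ (a d : V), d ≠ 0 → (L a d).card = Fintype.card K := by
    intro a d hd
    rw [hL]
    rw [Finset.card_image_of_injective _ (hinj a d hd), Finset.card_univ]
  -- key: a line through two distinct points equals the canonical line
  have hkey : ∀ (c d a b : V), d ≠ 0 → a ∈ L c d → b ∈ L c d → a ≠ b →
      L c d = L a (b - a) := by
    intro c d a b hd ha hb hab
    simp only [hL, Finset.mem_image, Finset.mem_univ, true_and] at ha hb
    obtain ⟨t₁, ht₁⟩ := ha
    obtain ⟨t₂, ht₂⟩ := hb
    have htne : t₂ - t₁ ≠ 0 := by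
      intro h
      rw [sub_eq_zero] at h
      exact hab (by rw [← ht₁, ← ht₂, h])
    have hba : b - a = (t₂ - t₁) • d := by rw [← ht₁, ← ht₂, sub_smul]; abel
    ext x
    simp only [hL, Finset.mem_image, Finset.mem_univ, true_and]
    constructor
    · rintro ⟨s, rfl⟩
      refine ⟨(s - t₁) / (t₂ - t₁), ?_⟩
      rw [hba, ← ht₁, smul_smul, div_mul_cancel₀ _ htne, sub_smul]
      abel
    · rintro ⟨u, rfl⟩
      refine ⟨t₁ + u * (t₂ - t₁), ?_⟩
      rw [hba, ← ht₁, smul_smul, add_smul]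
      abel
  refine ⟨(Finset.univ.filter (fun dd : V × V => dd.2 ≠ 0)).image (fun dd => L dd.1 dd.2), ?_, ?_⟩
  · intro S hS
    simp only [Finset.mem_image, Finset.mem_filter, Finset.mem_univ, true_and] at hS
    obtain ⟨⟨a, d⟩, hd, rfl⟩ := hS
    exact hLcard a d hd
  · intro a b hab
    have hba : b - a ≠ 0 := sub_ne_zero.mpr hab.symm
    refine ⟨L a (b - a), ⟨?_, ?_, ?_⟩, ?_⟩
    · exact Finset.mem_image.mpr ⟨(a, b - a), by simp [hba], rfl⟩
    · exact Finset.mem_image.mpr ⟨0, by simp⟩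
    · exact Finset.mem_image.mpr ⟨1, by simp⟩
    · rintro S ⟨hS, haS, hbS⟩
      simp only [Finset.mem_image, Finset.mem_filter, Finset.mem_univ, true_and] at hS
      obtain ⟨⟨c, d⟩, hd, rfl⟩ := hS
      exact hkey c d a b hd haS hbS hab

/-- Minimal one-round sorting (Steiner system `S(2, q, q^(2^k))`) exists when `q`
is a prime power and `n = q^(2^k)` for `k ≥ 1`. -/
theorem minimal_sorting_prime_power_tower
    (p j q k n : ℕ) (hp : p.Prime) (hj : 1 ≤ j) (hq : q = p ^ j)
    (hk : 1 ≤ k) (hn : n = q ^ (2 ^ k)) :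
    ∃ F : Finset (Finset (Fin n)),
      (∀ S ∈ F, S.card = q) ∧
      (∀ a b : Fin n, a ≠ b → ∃! S, S ∈ F ∧ a ∈ S ∧ b ∈ S) ∧
      F.card * Nat.choose q 2 = Nat.choose n 2 := by
  classical
  haveI : Fact p.Prime := ⟨hp⟩
  set K := GaloisField p j
  haveI : Fintype K := Fintype.ofFinite K
  have hKcard : Fintype.card K = q := by
    rw [← Nat.card_eq_fintype_card, GaloisField.card p j (by omega), hq]
  set V := Fin (2 ^ k) → K with hV
  have hVcard : Fintype.card V = n := by
    show Fintype.card (Fin (2 ^ k) → K) = n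
    rw [Fintype.card_fun, hKcard, Fintype.card_fin, hn]
  obtain ⟨F, hFc, hFu⟩ := affine_steiner K V
  set e : V ≃ Fin n := Fintype.equivFinOfCardEq hVcard with he
  refine ⟨F.image (Finset.image e), ?_, ?_, ?_⟩
  · intro S hS
    obtain ⟨S₀, hS₀, rfl⟩ := Finset.mem_image.mp hS
    rw [Finset.card_image_of_injective _ e.injective, hFc S₀ hS₀, hKcard]
  · intro a b hab
    have hab' : e.symm a ≠ e.symm b := fun h => hab (e.symm.injective h)
    obtain ⟨S, ⟨hS, haS, hbS⟩, huniq⟩ := hFu _ _ hab'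
    refine ⟨S.image e, ⟨Finset.mem_image_of_mem _ hS, ?_, ?_⟩, ?_⟩
    · exact Finset.mem_image.mpr ⟨e.symm a, haS, e.apply_symm_apply a⟩
    · exact Finset.mem_image.mpr ⟨e.symm b, hbS, e.apply_symm_apply b⟩
    · rintro T ⟨hT, haT, hbT⟩
      obtain ⟨T₀, hT₀, rfl⟩ := Finset.mem_image.mp hT
      have h1 : e.symm a ∈ T₀ := by
        obtain ⟨x, hx, hxa⟩ := Finset.mem_image.mp haT
        rw [← hxa, Equiv.symm_apply_apply]; exact hx
      have h2 : e.symm b ∈ T₀ := by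
        obtain ⟨x, hx, hxb⟩ := Finset.mem_image.mp hbT
        rw [← hxb, Equiv.symm_apply_apply]; exact hx
      rw [huniq T₀ ⟨hT₀, h1, h2⟩]
  · have := steiner_count (α := Fin n) (F.image (Finset.image e)) q
      (fun S hS => by
        obtain ⟨S₀, hS₀, rfl⟩ := Finset.mem_image.mp hS
        rw [Finset.card_image_of_injective _ e.injective, hFc S₀ hS₀, hKcard])
      ?_
    · rwa [Fintype.card_fin] at this
    · intro a b hab
      have hab' : e.symm a ≠ e.symm b := fun h => hab (e.symm.injective h)
      obtain ⟨S, ⟨hS, haS, hbS⟩, huniq⟩ := hFu _ _ hab'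
      refine ⟨S.image e, ⟨Finset.mem_image_of_mem _ hS, ?_, ?_⟩, ?_⟩
      · exact Finset.mem_image.mpr ⟨e.symm a, haS, e.apply_symm_apply a⟩
      · exact Finset.mem_image.mpr ⟨e.symm b, hbS, e.apply_symm_apply b⟩
      · rintro T ⟨hT, haT, hbT⟩
        obtain ⟨T₀, hT₀, rfl⟩ := Finset.mem_image.mp hT
        have h1 : e.symm a ∈ T₀ := by
          obtain ⟨x, hx, hxa⟩ := Finset.mem_image.mp haT
          rw [← hxa, Equiv.symm_apply_apply]; exact hx
        have h2 : e.symm b ∈ T₀ := by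
          obtain ⟨x, hx, hxb⟩ := Finset.mem_image.mp hbT
          rw [← hxb, Equiv.symm_apply_apply]; exact hx
        rw [huniq T₀ ⟨hT₀, h1, h2⟩]
end

section
/- Let n, t be natural numbers and let F be a finite family (a Finset of Finsets) of subsets of Fin n such that every member of F has cardinality exactly t, every pair of distinct elements of Fin n is contained in at least one member of F, and F.card * Nat.choose t 2 = Nat.choose n 2. Then every pair of distinct elements of Fin n is contained in exactly one member of F. -/
/-- A covering family of `t`-sets attaining the minimal comparator count
`(n choose 2) / (t choose 2)` covers every pair exactly once, i.e., it is a
Steiner system `S(2,t,n)`. -/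
theorem minimal_covering_is_steiner
    (n t : ℕ) (F : Finset (Finset (Fin n)))
    (hcard : ∀ S ∈ F, S.card = t)
    (hcov : ∀ a b : Fin n, a ≠ b → ∃ S ∈ F, a ∈ S ∧ b ∈ S)
    (hmin : F.card * Nat.choose t 2 = Nat.choose n 2) :
    ∀ a b : Fin n, a ≠ b → ∃! S, S ∈ F ∧ a ∈ S ∧ b ∈ S := by
  classical
  set P : Finset (Finset (Fin n)) := Finset.univ.powersetCard 2 with hP
  set f : Finset (Fin n) → ℕ := fun p => (F.filter (fun S => p ⊆ S)).card with hf
  have hsum : ∑ p ∈ P, f p = F.card * Nat.choose t 2 := by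
    have : ∑ p ∈ P, f p = ∑ S ∈ F, (P.filter (fun p => p ⊆ S)).card := by
      simp only [hf, Finset.card_filter]
      exact Finset.sum_comm
    rw [this]
    rw [Finset.sum_congr rfl (fun S hS => ?_), Finset.sum_const, smul_eq_mul]
    have : P.filter (fun p => p ⊆ S) = S.powersetCard 2 := by
      ext p
      simp only [hP, Finset.mem_filter, Finset.mem_powersetCard]
      constructor
      · rintro ⟨⟨-, h2⟩, hsub⟩; exact ⟨hsub, h2⟩
      · rintro ⟨hsub, h2⟩; exact ⟨⟨Finset.subset_univ _, h2⟩, hsub⟩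
    rw [this, Finset.card_powersetCard, hcard S hS]
  have hPcard : P.card = Nat.choose n 2 := by
    simp [hP, Finset.card_powersetCard]
  have hsum' : ∑ p ∈ P, f p = ∑ p ∈ P, 1 := by
    rw [hsum, hmin, Finset.sum_const, smul_eq_mul, mul_one, hPcard]
  have hle : ∀ p ∈ P, 1 ≤ f p := by
    intro p hp
    simp only [hP, Finset.mem_powersetCard] at hp
    obtain ⟨a, b, hab, hpab⟩ := Finset.card_eq_two.mp hp.2
    obtain ⟨S, hS, haS, hbS⟩ := hcov a b hab
    refine Finset.card_pos.mpr ⟨S, Finset.mem_filter.mpr ⟨hS, ?_⟩⟩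
    rw [hpab]; intro x hx
    rcases Finset.mem_insert.mp hx with h | h
    · exact h ▸ haS
    · rw [Finset.mem_singleton.mp h]; exact hbS
  have hall : ∀ p ∈ P, f p = 1 := by
    intro p hp
    exact ((Finset.sum_eq_sum_iff_of_le hle).mp hsum'.symm p hp).symm
  intro a b hab
  have hmem : ({a, b} : Finset (Fin n)) ∈ P := by
    simp only [hP, Finset.mem_powersetCard]
    exact ⟨Finset.subset_univ _, Finset.card_pair hab⟩
  have h1 : f {a, b} = 1 := hall _ hmem
  obtain ⟨S, hSeq⟩ := Finset.card_eq_one.mp h1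
  have hSmem : S ∈ F.filter (fun S => ({a, b} : Finset (Fin n)) ⊆ S) := by
    rw [hSeq]; exact Finset.mem_singleton_self S
  rw [Finset.mem_filter] at hSmem
  refine ⟨S, ⟨hSmem.1, hSmem.2 (by simp), hSmem.2 (by simp)⟩, ?_⟩
  rintro T ⟨hTF, haT, hbT⟩
  have : T ∈ F.filter (fun S => ({a, b} : Finset (Fin n)) ⊆ S) := by
    rw [Finset.mem_filter]
    exact ⟨hTF, by intro x hx; rcases Finset.mem_insert.mp hx with h | h
                   · exact h ▸ haT
                   · rw [Finset.mem_singleton.mp h]; exact hbT⟩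
  rw [hSeq, Finset.mem_singleton] at this
  exact this
end

section
/- Let t, m, n be natural numbers with 2 ≤ t. Suppose there exists a finite family F' of t-element subsets of Fin m such that every pair of distinct elements of Fin m is contained in exactly one member of F', and there exists a finite family G of m-element subsets of Fin n such that every pair of distinct elements of Fin n is contained in exactly one member of G. Then there exists a finite family H of t-element subsets of Fin n such that every pair of distinct elements of Fin n is contained in exactly one member of H. -/
/-- Composition of Steiner systems: an `S(2,m,n)` whose blocks are each refined
by a copy of an `S(2,t,m)` yields an `S(2,t,n)`. -/
theorem steiner_composition
    (t m n : ℕ) (ht : 2 ≤ t)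
    (hF : ∃ F' : Finset (Finset (Fin m)),
      (∀ S ∈ F', S.card = t) ∧
      (∀ a b : Fin m, a ≠ b → ∃! S, S ∈ F' ∧ a ∈ S ∧ b ∈ S))
    (hG : ∃ G : Finset (Finset (Fin n)),
      (∀ S ∈ G, S.card = m) ∧
      (∀ a b : Fin n, a ≠ b → ∃! S, S ∈ G ∧ a ∈ S ∧ b ∈ S)) :
    ∃ H : Finset (Finset (Fin n)),
      (∀ S ∈ H, S.card = t) ∧
      (∀ a b : Fin n, a ≠ b → ∃! S, S ∈ H ∧ a ∈ S ∧ b ∈ S) := by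
  classical
  obtain ⟨F', hFt, hFu⟩ := hF
  obtain ⟨G, hGm, hGu⟩ := hG
  -- for each block B of card m, an embedding Fin m → Fin n with image B
  let emb : ∀ B : Finset (Fin n), B.card = m → Fin m → Fin n :=
    fun B h i => (B.equivFin.symm (Fin.cast h.symm i) : {x // x ∈ B}).1
  have emb_inj : ∀ B h, Function.Injective (emb B h) := by
    intro B h x y hxy
    have : B.equivFin.symm (Fin.cast h.symm x) = B.equivFin.symm (Fin.cast h.symm y) :=
      Subtype.ext hxy
    have := B.equivFin.symm.injective this
    exact Fin.cast_injective _ this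
  have emb_mem : ∀ B h i, emb B h i ∈ B := fun B h i =>
    (B.equivFin.symm (Fin.cast h.symm i)).2
  have emb_surj : ∀ B h (x : Fin n), x ∈ B → ∃ i, emb B h i = x := by
    intro B h x hx
    refine ⟨Fin.cast h (B.equivFin ⟨x, hx⟩), ?_⟩
    simp [emb]
  refine ⟨G.biUnion (fun B => if h : B.card = m then
      F'.image (fun S => S.image (emb B h)) else ∅), ?_, ?_⟩
  · intro S hS
    simp only [Finset.mem_biUnion] at hS
    obtain ⟨B, hB, hS⟩ := hS
    rw [dif_pos (hGm B hB)] at hS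
    obtain ⟨S0, hS0, rfl⟩ := Finset.mem_image.mp hS
    rw [Finset.card_image_of_injective _ (emb_inj B (hGm B hB))]
    exact hFt S0 hS0
  · intro a b hab
    obtain ⟨B, ⟨hBG, haB, hbB⟩, hBuniq⟩ := hGu a b hab
    have hB := hGm B hBG
    obtain ⟨a', ha'⟩ := emb_surj B hB a haB
    obtain ⟨b', hb'⟩ := emb_surj B hB b hbB
    have hab' : a' ≠ b' := by
      intro h; apply hab; rw [← ha', ← hb', h]
    obtain ⟨S0, ⟨hS0F, haS0, hbS0⟩, hS0uniq⟩ := hFu a' b' hab'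
    refine ⟨S0.image (emb B hB), ⟨?_, ?_, ?_⟩, ?_⟩
    · simp only [Finset.mem_biUnion]
      exact ⟨B, hBG, by rw [dif_pos hB]; exact Finset.mem_image_of_mem _ hS0F⟩
    · exact ha' ▸ Finset.mem_image_of_mem _ haS0
    · exact hb' ▸ Finset.mem_image_of_mem _ hbS0
    · rintro S ⟨hSH, haS, hbS⟩
      simp only [Finset.mem_biUnion] at hSH
      obtain ⟨B', hB'G, hS⟩ := hSH
      have hB' := hGm B' hB'G
      rw [dif_pos hB'] at hS
      obtain ⟨S1, hS1F, rfl⟩ := Finset.mem_image.mp hS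
      -- S1.image ⊆ B', and a,b ∈ it, so B' = B
      have hBB : B' = B := by
        refine hBuniq B' ⟨hB'G, ?_, ?_⟩
        · obtain ⟨x, _, hx⟩ := Finset.mem_image.mp haS
          exact hx ▸ emb_mem B' hB' x
        · obtain ⟨x, _, hx⟩ := Finset.mem_image.mp hbS
          exact hx ▸ emb_mem B' hB' x
      subst hBB
      -- now a', b' ∈ S1
      have haS1 : a' ∈ S1 := by
        obtain ⟨x, hxS1, hx⟩ := Finset.mem_image.mp haS
        have : x = a' := emb_inj B' hB' (by rw [hx, ha'])
        exact this ▸ hxS1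
      have hbS1 : b' ∈ S1 := by
        obtain ⟨x, hxS1, hx⟩ := Finset.mem_image.mp hbS
        have : x = b' := emb_inj B' hB' (by rw [hx, hb'])
        exact this ▸ hxS1
      rw [hS0uniq S1 ⟨hS1F, haS1, hbS1⟩]
end

section
/- Let n, t be natural numbers and let F be a finite family (a Finset of Finsets) of subsets of Fin n such that every member of F has cardinality at most t and every pair of distinct elements of Fin n is contained in at least one member of F. Then F.card * Nat.choose t 2 ≥ Nat.choose n 2. -/
/-- Lower bound for one-round sorting: any family of sets of cardinality at
most `t` covering all pairs of `Fin n` has at least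
`(n choose 2) / (t choose 2)` members. -/
theorem covering_family_lower_bound
    (n t : ℕ) (F : Finset (Finset (Fin n)))
    (hcard : ∀ S ∈ F, S.card ≤ t)
    (hcov : ∀ a b : Fin n, a ≠ b → ∃ S ∈ F, a ∈ S ∧ b ∈ S) :
    F.card * Nat.choose t 2 ≥ Nat.choose n 2 := by
  have hsub : (Finset.univ : Finset (Fin n)).powersetCard 2 ⊆
      F.biUnion (fun S => S.powersetCard 2) := by
    intro P hP
    rw [Finset.mem_powersetCard] at hP
    obtain ⟨a, b, hab, rfl⟩ := Finset.card_eq_two.mp hP.2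
    obtain ⟨S, hS, haS, hbS⟩ := hcov a b hab
    rw [Finset.mem_biUnion]
    exact ⟨S, hS, Finset.mem_powersetCard.mpr ⟨by
      intro x hx
      rcases Finset.mem_insert.mp hx with rfl | hx
      · exact haS
      · rwa [Finset.mem_singleton.mp hx], Finset.card_eq_two.mpr ⟨a, b, hab, rfl⟩⟩⟩
  calc Nat.choose n 2 = ((Finset.univ : Finset (Fin n)).powersetCard 2).card := by
        rw [Finset.card_powersetCard, Finset.card_univ, Fintype.card_fin]
    _ ≤ (F.biUnion (fun S => S.powersetCard 2)).card := Finset.card_le_card hsub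
    _ ≤ ∑ S ∈ F, (S.powersetCard 2).card := Finset.card_biUnion_le
    _ ≤ ∑ S ∈ F, Nat.choose t 2 := Finset.sum_le_sum (fun S hS => by
        rw [Finset.card_powersetCard]
        exact Nat.choose_le_choose 2 (hcard S hS))
    _ = F.card * Nat.choose t 2 := by rw [Finset.sum_const, smul_eq_mul]
end

section
/- Let n be a natural number and let F be a finite family of finite subsets of Fin n. Then the following are equivalent: (i) for all bijections f, g : Fin n → Fin n, if for every S ∈ F and all i, j ∈ S one has (f i ≤ f j ↔ g i ≤ g j), then f = g; (ii) for every pair of distinct elements i, j of Fin n there exists S ∈ F with i ∈ S and j ∈ S. -/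
/-- A one-round comparison scheme `F` sorts `n` elements (exactly one ranking
is consistent with all comparator outputs) if and only if every pair of
distinct elements is compared by some comparator. -/
theorem sorts_iff_covers_pairs
    (n : ℕ) (F : Finset (Finset (Fin n))) :
    (∀ f g : Fin n ≃ Fin n,
        (∀ S ∈ F, ∀ i ∈ S, ∀ j ∈ S, (f i ≤ f j ↔ g i ≤ g j)) → f = g) ↔
    (∀ i j : Fin n, i ≠ j → ∃ S ∈ F, i ∈ S ∧ j ∈ S) := by
  constructor
  · -- contrapositive: if some pair uncovered, build two distinct consistent perms
    intro hsort i j hij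
    by_contra hcov
    push_neg at hcov
    have hn : 2 ≤ n := by
      by_contra h
      push_neg at h
      interval_cases n
      · exact i.elim0
      · exact hij (Subsingleton.elim i j)
    set z : Fin n := ⟨0, by omega⟩ with hz
    set o : Fin n := ⟨1, by omega⟩ with ho
    have hzo : z ≠ o := by simp [hz, ho, Fin.ext_iff]
    -- build f with f i = z, f j = o
    let a : Fin n ≃ Fin n := Equiv.swap z i
    have haj : a j ≠ z := by
      intro h
      apply hij
      have : a j = a i := by simpa [a, Equiv.swap_apply_right] using h
      exact a.injective this |>.symm
    let b : Fin n ≃ Fin n := Equiv.swap o (a j)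
    let f : Fin n ≃ Fin n := a.trans b
    have hfi : f i = z := by
      simp only [f, Equiv.trans_apply, a, Equiv.swap_apply_right]
      exact Equiv.swap_apply_of_ne_of_ne hzo haj.symm
    have hfj : f j = o := by
      simp only [f, Equiv.trans_apply, b, Equiv.swap_apply_right]
    let g : Fin n ≃ Fin n := f.trans (Equiv.swap z o)
    have hgi : g i = o := by simp [g, hfi, Equiv.swap_apply_left]
    have hg : ∀ x, x ≠ i → x ≠ j → g x = f x := by
      intro x hxi hxj
      have h1 : f x ≠ z := fun h => hxi (f.injective (h.trans hfi.symm))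
      have h2 : f x ≠ o := fun h => hxj (f.injective (h.trans hfj.symm))
      simp [g, Equiv.swap_apply_of_ne_of_ne h1 h2]
    have key : ∀ S ∈ F, ∀ p ∈ S, ∀ q ∈ S, (f p ≤ f q ↔ g p ≤ g q) := by
      intro S hS p hp q hq
      rcases eq_or_ne p q with rfl | hpq
      · simp
      have hnotboth : ¬(i ∈ S ∧ j ∈ S) := fun ⟨h1, h2⟩ => hcov S hS h1 h2
      -- at most one of p, q is in {i, j}
      rcases eq_or_ne p i with rfl | hpi
      · -- p = i, so q ≠ i, q ≠ j
        have hqj : q ≠ j := fun h => hnotboth ⟨hp, h ▸ hq⟩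
        have hqi : q ≠ p := hpq.symm
        rw [hg q hqi hqj, hfi, hgi]
        have h1 : f q ≠ z := fun h => hqi (f.injective (h.trans hfi.symm))
        have h2 : f q ≠ o := fun h => hqj (f.injective (h.trans hfj.symm))
        have hv1 : (f q).val ≠ 0 := fun h => h1 (Fin.ext h)
        have hv2 : (f q).val ≠ 1 := fun h => h2 (Fin.ext h)
        rw [Fin.le_def, Fin.le_def]
        show (0:ℕ) ≤ _ ↔ (1:ℕ) ≤ _
        omega
      rcases eq_or_ne p j with rfl | hpj
      · have hqi : q ≠ i := fun h => hnotboth ⟨h ▸ hq, hp⟩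
        have hqj : q ≠ p := hpq.symm
        rw [hg q hqi hqj, hfj]
        have hgp : g p = z := by simp [g, hfj, Equiv.swap_apply_right]
        rw [hgp]
        have hv1 : (f q).val ≠ 0 := fun h =>
          hqi (f.injective ((Fin.ext h).trans hfi.symm))
        have hv2 : (f q).val ≠ 1 := fun h =>
          hqj (f.injective ((Fin.ext h).trans hfj.symm))
        rw [Fin.le_def, Fin.le_def]
        show (1:ℕ) ≤ _ ↔ (0:ℕ) ≤ _
        omega
      rcases eq_or_ne q i with rfl | hqi
      · rw [hg p hpi hpj, hfi, hgi]
        have hv1 : (f p).val ≠ 0 := fun h =>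
          hpi (f.injective ((Fin.ext h).trans hfi.symm))
        have hv2 : (f p).val ≠ 1 := fun h =>
          hpj (f.injective ((Fin.ext h).trans hfj.symm))
        rw [Fin.le_def, Fin.le_def]
        show _ ≤ (0:ℕ) ↔ _ ≤ (1:ℕ)
        omega
      rcases eq_or_ne q j with rfl | hqj
      · rw [hg p hpi hpj, hfj]
        have hgq : g q = z := by simp [g, hfj, Equiv.swap_apply_right]
        rw [hgq]
        have hv1 : (f p).val ≠ 0 := fun h =>
          hpi (f.injective ((Fin.ext h).trans hfi.symm))
        have hv2 : (f p).val ≠ 1 := fun h =>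
          hpj (f.injective ((Fin.ext h).trans hfj.symm))
        rw [Fin.le_def, Fin.le_def]
        show _ ≤ (1:ℕ) ↔ _ ≤ (0:ℕ)
        omega
      · rw [hg p hpi hpj, hg q hqi hqj]
    have := hsort f g key
    rw [this] at hfi
    exact hzo (hfi.symm.trans hgi)
  · intro hcov f g hcmp
    have hall : ∀ i j : Fin n, f i ≤ f j ↔ g i ≤ g j := by
      intro i j
      rcases eq_or_ne i j with rfl | hij
      · simp
      obtain ⟨S, hS, hi, hj⟩ := hcov i j hij
      exact hcmp S hS i hi j hj
    have hsm : StrictMono (g ∘ f.symm) := by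
      intro x y hxy
      have h1 : ¬ (f (f.symm y) ≤ f (f.symm x)) := by
        simpa using hxy.not_ge
      have h2 := (hall (f.symm y) (f.symm x)).not.mp h1
      exact lt_of_not_ge h2
    have hrange : Set.range (g ∘ f.symm) = Set.range (id : Fin n → Fin n) := by
      simp [Set.range_comp, Set.range_eq_univ.mpr f.symm.surjective,
        Set.image_univ, Set.range_eq_univ.mpr g.surjective]
    haveI hwf : WellFoundedLT (Fin n) := inferInstance
    have heq : (g ∘ f.symm) = (id : Fin n → Fin n) :=
      (hsm.range_inj strictMono_id).1 hrange
    ext x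
    have h2 : g x = f x := by simpa using congrFun heq (f x)
    exact congrArg Fin.val h2.symm
end

section
/- Let n, t be natural numbers with t even, 2 ≤ t ≤ n, and (t/2) ∣ n. Then there exists a finite family F of subsets of Fin n, each of cardinality at most t, such that every pair of distinct elements of Fin n is contained in some member of F, F.card = Nat.choose (2*n/t) 2, and F.card * Nat.choose t 2 < 2 * Nat.choose n 2. -/
/-- `2 * (k choose 2) = k * (k-1)`. -/
lemma two_mul_choose_two (k : ℕ) : 2 * Nat.choose k 2 = k * (k - 1) := by
  rw [Nat.choose_two_right]
  rcases k with _ | k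
  · simp
  · have hdvd : 2 ∣ (k + 1) * k := by
      rcases Nat.even_or_odd k with he | ho
      · exact Dvd.dvd.mul_left he.two_dvd _
      · exact (ho.add_one.two_dvd).mul_right _
    rw [Nat.succ_sub_one, Nat.mul_div_cancel' hdvd]

/-- When `t` is even, `2 ≤ t ≤ n` and `(t/2) ∣ n`, splitting `Fin n` into
`2n/t` groups of size `t/2` and comparing unions of pairs of groups gives a
covering family of `(2n/t choose 2)` sets, each of size at most `t`, which is
within a factor `2` of the information-theoretic minimum. -/
theorem covering_within_factor_two
    (n t : ℕ) (hteven : Even t) (ht2 : 2 ≤ t) (htn : t ≤ n) (hdvd : (t / 2) ∣ n) :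
    ∃ F : Finset (Finset (Fin n)),
      (∀ S ∈ F, S.card ≤ t) ∧
      (∀ a b : Fin n, a ≠ b → ∃ S ∈ F, a ∈ S ∧ b ∈ S) ∧
      F.card = Nat.choose (2 * n / t) 2 ∧
      F.card * Nat.choose t 2 < 2 * Nat.choose n 2 := by
  obtain ⟨h, rfl⟩ := hteven
  have hh1 : 1 ≤ h := by omega
  have hdiv2 : (h + h) / 2 = h := by omega
  rw [hdiv2] at hdvd
  obtain ⟨m, rfl⟩ := hdvd
  have hm2 : 2 ≤ m := by
    by_contra hm
    push_neg at hm
    interval_cases m <;> omega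
  have hpos : 0 < h := hh1
  -- the family
  set F : Finset (Finset (Fin (h * m))) :=
    ((Finset.range m).powersetCard 2).image
      (fun p => Finset.univ.filter (fun x : Fin (h * m) => x.val / h ∈ p)) with hFdef
  have hgroup_lt : ∀ x : Fin (h * m), x.val / h < m := by
    intro x
    rw [Nat.div_lt_iff_lt_mul hpos]
    calc x.val < h * m := x.isLt
    _ = m * h := by ring
  -- each member has card ≤ t
  have hcard_le : ∀ S ∈ F, S.card ≤ h + h := by
    intro S hS
    rw [hFdef, Finset.mem_image] at hS
    obtain ⟨p, hp, rfl⟩ := hS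
    rw [Finset.mem_powersetCard] at hp
    refine le_trans (Finset.card_le_card_of_injOn
      (fun x : Fin (h * m) => (x.val / h, x.val % h))
      (t := p ×ˢ Finset.range h) ?_ ?_) ?_
    · intro x hx
      rw [Finset.mem_coe, Finset.mem_filter] at hx
      exact Finset.mk_mem_product hx.2 (Finset.mem_range.2 (Nat.mod_lt _ hpos))
    swap
    · calc (p ×ˢ Finset.range h).card = 2 * h := by
            rw [Finset.card_product, hp.2, Finset.card_range]
        _ = h + h := by ring
        _ ≤ h + h := le_rfl
    · intro x _ y _ hxy
      simp only [Prod.mk.injEq] at hxy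
      obtain ⟨h1, h2⟩ := hxy
      apply Fin.ext
      rw [← Nat.div_add_mod x.val h, ← Nat.div_add_mod y.val h, h1, h2]
  -- covering
  have hcover : ∀ a b : Fin (h * m), a ≠ b → ∃ S ∈ F, a ∈ S ∧ b ∈ S := by
    intro a b hab
    set i := a.val / h with hi
    set j := b.val / h with hj
    have him : i < m := hgroup_lt a
    have hjm : j < m := hgroup_lt b
    by_cases hij : i = j
    · set k : ℕ := if i = 0 then 1 else 0 with hk
      have hki : k ≠ i := by by_cases h0 : i = 0 <;> simp [hk, h0] <;> omega
      have hkm : k < m := by by_cases h0 : i = 0 <;> simp [hk, h0] <;> omega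
      refine ⟨Finset.univ.filter (fun x : Fin (h * m) => x.val / h ∈ ({i, k} : Finset ℕ)), ?_, ?_, ?_⟩
      · rw [hFdef, Finset.mem_image]
        refine ⟨{i, k}, ?_, rfl⟩
        rw [Finset.mem_powersetCard]
        constructor
        · intro x hx
          rw [Finset.mem_insert, Finset.mem_singleton] at hx
          rcases hx with rfl | rfl <;> exact Finset.mem_range.2 (by assumption)
        · rw [Finset.card_insert_of_notMem (by simpa using (Ne.symm hki)), Finset.card_singleton]
      · simp [← hi]
      · simp [← hj, ← hij]
    · refine ⟨Finset.univ.filter (fun x : Fin (h * m) => x.val / h ∈ ({i, j} : Finset ℕ)), ?_, ?_, ?_⟩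
      · rw [hFdef, Finset.mem_image]
        refine ⟨{i, j}, ?_, rfl⟩
        rw [Finset.mem_powersetCard]
        constructor
        · intro x hx
          rw [Finset.mem_insert, Finset.mem_singleton] at hx
          rcases hx with rfl | rfl <;> exact Finset.mem_range.2 (by assumption)
        · rw [Finset.card_insert_of_notMem (by simpa using hij), Finset.card_singleton]
      · simp [← hi]
      · simp [← hj]
  -- the cardinality of F
  have hFcard : F.card = Nat.choose m 2 := by
    rw [hFdef, Finset.card_image_of_injOn, Finset.card_powersetCard, Finset.card_range]
    have key : ∀ p ∈ (Finset.range m).powersetCard 2,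
        ∀ q ∈ (Finset.range m).powersetCard 2,
        (Finset.univ.filter (fun x : Fin (h * m) => x.val / h ∈ p))
          = (Finset.univ.filter (fun x : Fin (h * m) => x.val / h ∈ q)) → p ⊆ q := by
      intro p hp q hq heq i hip
      have him : i < m := Finset.mem_range.1 ((Finset.mem_powersetCard.1 hp).1 hip)
      have hx : i * h < h * m := by
        calc i * h < m * h := Nat.mul_lt_mul_of_lt_of_le him le_rfl hpos
        _ = h * m := by ring
      set x : Fin (h * m) := ⟨i * h, hx⟩ with hxdef
      have hxd : x.val / h = i := Nat.mul_div_cancel i hpos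
      have hxp : x ∈ Finset.univ.filter (fun x : Fin (h * m) => x.val / h ∈ p) := by
        rw [Finset.mem_filter]
        exact ⟨Finset.mem_univ _, by rw [hxd]; exact hip⟩
      rw [heq, Finset.mem_filter, hxd] at hxp
      exact hxp.2
    intro p hp q hq heq
    exact Finset.Subset.antisymm (key p hp q hq heq) (key q hq p hp heq.symm)
  have hm_eq : 2 * (h * m) / (h + h) = m := by
    rw [show h + h = 2 * h by ring, show 2 * (h * m) = (2 * h) * m by ring,
      Nat.mul_div_cancel_left _ (by omega)]
  refine ⟨F, hcard_le, hcover, by rw [hFcard, hm_eq], ?_⟩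
  -- the counting inequality
  rw [hFcard]
  obtain ⟨M, rfl⟩ : ∃ M, m = M + 2 := ⟨m - 2, by omega⟩
  obtain ⟨H, rfl⟩ : ∃ H, h = H + 1 := ⟨h - 1, by omega⟩
  have hA := two_mul_choose_two (M + 2)
  have hB := two_mul_choose_two ((H + 1) + (H + 1))
  have hC := two_mul_choose_two ((H + 1) * (M + 2))
  have eA : (M + 2) - 1 = M + 1 := by omega
  have eB : ((H + 1) + (H + 1)) - 1 = 2 * H + 1 := by omega
  have eC : ((H + 1) * (M + 2)) - 1 = H * M + 2 * H + M + 1 := by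
    have : (H + 1) * (M + 2) = H * M + 2 * H + M + 2 := by ring
    omega
  rw [eA] at hA
  rw [eB] at hB
  rw [eC] at hC
  apply Nat.lt_of_mul_lt_mul_left (a := 4)
  calc 4 * (Nat.choose (M + 2) 2 * Nat.choose ((H + 1) + (H + 1)) 2)
      = (2 * Nat.choose (M + 2) 2) * (2 * Nat.choose ((H + 1) + (H + 1)) 2) := by ring
    _ = ((M + 2) * (M + 1)) * (((H + 1) + (H + 1)) * (2 * H + 1)) := by rw [hA, hB]
    _ < 2 * ((H + 1) * (M + 2) * (H * M + 2 * H + M + 1)) * 2 := by nlinarith [Nat.zero_le (H * M)]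
    _ = 4 * (2 * Nat.choose ((H + 1) * (M + 2)) 2) := by rw [hC]; ring
end

section
/- Let n, t be natural numbers with t even and 2 ≤ t ≤ n. Then there exists a finite family F of subsets of Fin n, each of cardinality at most t, such that every pair of distinct elements of Fin n is contained in some member of F and F.card * Nat.choose t 2 < 3 * Nat.choose n 2. -/
/-- For any `n` and even `t` with `2 ≤ t ≤ n`, one-round sorting is possible
with fewer than three times the information-theoretic minimum of
`(n choose 2) / (t choose 2)` comparators. -/
theorem covering_within_factor_three
    (n t : ℕ) (hteven : Even t) (ht2 : 2 ≤ t) (htn : t ≤ n) :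
    ∃ F : Finset (Finset (Fin n)),
      (∀ S ∈ F, S.card ≤ t) ∧
      (∀ a b : Fin n, a ≠ b → ∃ S ∈ F, a ∈ S ∧ b ∈ S) ∧
      F.card * Nat.choose t 2 < 3 * Nat.choose n 2 := by
  obtain ⟨s, hs⟩ := hteven
  have hst : t = 2 * s := by omega
  have hs1 : 1 ≤ s := by omega
  have hn2 : 2 ≤ n := le_trans ht2 htn
  set m : ℕ := (n - 1) / s + 1 with hm
  have hm2 : 2 ≤ m := by
    have : 1 ≤ (n - 1) / s := (Nat.one_le_div_iff (by omega)).2 (by omega)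
    omega
  set block : ℕ → Finset (Fin n) := fun i => Finset.univ.filter (fun a : Fin n => a.val / s = i)
    with hblock
  have hblockcard : ∀ i, (block i).card ≤ s := by
    intro i
    have := Finset.card_le_card_of_injOn (f := fun a : Fin n => a.val % s)
      (s := block i) (t := Finset.range s) ?_ ?_
    · simpa using this
    · intro a ha
      simp only [Finset.mem_coe, Finset.mem_range]
      exact Nat.mod_lt _ (by omega : s > 0)
    · intro a ha b hb hab
      simp only [hblock, Finset.mem_coe, Finset.mem_filter] at ha hb
      have h1 : a.val = s * i + a.val % s := by
        conv_lhs => rw [← Nat.div_add_mod a.val s]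
        rw [ha.2]
      have h2 : b.val = s * i + b.val % s := by
        conv_lhs => rw [← Nat.div_add_mod b.val s]
        rw [hb.2]
      have : a.val = b.val := by simp only at hab; omega
      exact Fin.ext this
  have hmem : ∀ a : Fin n, a.val / s < m := by
    intro a
    have h1 : a.val / s ≤ (n - 1) / s := Nat.div_le_div_right (by omega)
    omega
  refine ⟨((Finset.range m).powersetCard 2).image
    (fun p => p.biUnion block), ?_, ?_, ?_⟩
  · intro S hS
    simp only [Finset.mem_image, Finset.mem_powersetCard] at hS
    obtain ⟨p, ⟨hpsub, hpcard⟩, rfl⟩ := hS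
    calc (p.biUnion block).card ≤ ∑ i ∈ p, (block i).card := Finset.card_biUnion_le
      _ ≤ ∑ _i ∈ p, s := Finset.sum_le_sum (fun i _ => hblockcard i)
      _ = 2 * s := by rw [Finset.sum_const, hpcard]; ring
      _ = t := hst.symm
  · intro a b hab
    set i := a.val / s with hi
    set j := b.val / s with hj
    set k : ℕ := if i = j then (if i = 0 then 1 else 0) else j with hk
    have hik : i ≠ k := by
      by_cases h : i = j <;> simp only [hk, h, if_true, if_false] <;> [skip; omega]
      split <;> omega
    have hkm : k < m := by
      by_cases h : i = j
      · simp only [hk, h, if_true]; split <;> omega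
      · simp only [hk, if_neg h]; exact hmem b
    refine ⟨({i, k} : Finset ℕ).biUnion block, ?_, ?_, ?_⟩
    · apply Finset.mem_image_of_mem
      rw [Finset.mem_powersetCard]
      constructor
      · intro x hx
        simp only [Finset.mem_insert, Finset.mem_singleton] at hx
        rcases hx with rfl | rfl
        · exact Finset.mem_range.2 (hmem a)
        · exact Finset.mem_range.2 hkm
      · rw [Finset.card_insert_of_notMem (by simpa using hik), Finset.card_singleton]
    · rw [Finset.mem_biUnion]
      exact ⟨i, by simp, by simp [hblock, hi]⟩
    · rw [Finset.mem_biUnion]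
      by_cases h : i = j
      · exact ⟨i, by simp, by simp [hblock, hj, h]⟩
      · exact ⟨k, by simp [hk, h], by simp [hblock, hk, h, hj]; intro h'; exact absurd (h'.trans hj.symm) h⟩
  · -- cardinality bound
    have hF : (((Finset.range m).powersetCard 2).image
        (fun p => p.biUnion block)).card ≤ Nat.choose m 2 := by
      refine le_trans Finset.card_image_le ?_
      rw [Finset.card_powersetCard, Finset.card_range]
    set A := (((Finset.range m).powersetCard 2).image (fun p => p.biUnion block)).card with hA
    have hms : m * s ≤ n - 1 + s := by
      have : (n - 1) / s * s ≤ n - 1 := Nat.div_mul_le_self _ _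
      have hmeq : m * s = (n - 1) / s * s + s := by rw [hm]; ring
      omega
    have hm1s : (m - 1) * s ≤ n - 1 := by
      have h0 : m - 1 = (n - 1) / s := by omega
      rw [h0]; exact Nat.div_mul_le_self _ _
    -- introduce subtraction-free variables
    clear_value A m block
    obtain ⟨m', rfl⟩ : ∃ m', m = m' + 1 := ⟨m - 1, by omega⟩
    obtain ⟨n', hn'⟩ : ∃ n', n = n' + 1 := ⟨n - 1, by omega⟩
    have key : (m' + 1) * m' * (t * (t - 1)) < 6 * (n * (n - 1)) := by
      have h3 : ((m' + 1) * s) * (m' * s) ≤ (n' + s) * n' := by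
        apply Nat.mul_le_mul
        · calc (m' + 1) * s ≤ n - 1 + s := hms
            _ = n' + s := by omega
        · calc m' * s = (m' + 1 - 1) * s := by norm_num
            _ ≤ n - 1 := hm1s
            _ = n' := by omega
      have ht1 : t - 1 = 2 * s - 1 := by omega
      have hsn : 2 * s ≤ n' + 1 := by omega
      subst hn'
      simp only [Nat.add_sub_cancel]
      rw [hst]
      have hu : 2 * s - 1 < 2 * s := by omega
      calc (m' + 1) * m' * (2 * s * (2 * s - 1))
          < (m' + 1) * m' * (2 * s * (2 * s)) := by
            exact mul_lt_mul_of_pos_left (mul_lt_mul_of_pos_left hu (by omega))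
              (Nat.mul_pos (by omega) (by omega))
        _ = 4 * (((m' + 1) * s) * (m' * s)) := by ring
        _ ≤ 4 * ((n' + s) * n') := by omega
        _ ≤ 6 * ((n' + 1) * n') := by nlinarith
    have e1 : 2 * (A * Nat.choose t 2) ≤ (m' + 1) * m' * Nat.choose t 2 := by
      have := Nat.mul_le_mul_right (Nat.choose t 2) hF
      have h2 : 2 * Nat.choose (m' + 1) 2 = (m' + 1) * m' := by
        rw [two_mul_choose_two]; norm_num
      calc 2 * (A * Nat.choose t 2) ≤ 2 * (Nat.choose (m' + 1) 2 * Nat.choose t 2) := by omega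
        _ = (2 * Nat.choose (m' + 1) 2) * Nat.choose t 2 := by ring
        _ = (m' + 1) * m' * Nat.choose t 2 := by rw [h2]
    have e2 : 2 * ((m' + 1) * m' * Nat.choose t 2) = (m' + 1) * m' * (t * (t - 1)) := by
      rw [show 2 * ((m' + 1) * m' * Nat.choose t 2) = (m' + 1) * m' * (2 * Nat.choose t 2) by ring,
        two_mul_choose_two]
    have e3 : 2 * (2 * (3 * Nat.choose n 2)) = 6 * (n * (n - 1)) := by
      rw [show 2 * (2 * (3 * Nat.choose n 2)) = 6 * (2 * Nat.choose n 2) by ring,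
        two_mul_choose_two]
    omega
end

section
/- Let n, t be natural numbers with 2*n ≤ 3*t and t ≤ n. Then there exist three subsets S₁, S₂, S₃ of Fin n, each of cardinality at most t, such that every pair of distinct elements of Fin n is contained in at least one of S₁, S₂, S₃. -/
lemma card_filter_val (n : ℕ) (p : ℕ → Prop) [DecidablePred p] :
    (Finset.univ.filter (fun i : Fin n => p i.val)).card
      = ((Finset.range n).filter p).card := by
  rw [← Finset.card_map Fin.valEmbedding]
  congr 1
  ext x
  simp only [Finset.mem_map, Finset.mem_filter, Finset.mem_univ, true_and,
    Fin.valEmbedding_apply, Finset.mem_range]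
  constructor
  · rintro ⟨i, hp, rfl⟩; exact ⟨i.isLt, hp⟩
  · rintro ⟨hx, hp⟩; exact ⟨⟨x, hx⟩, hp, rfl⟩

/-- For `t ≥ (2/3) n`, three `t`-comparators suffice to cover all pairs of
`Fin n` in a single round. -/
theorem three_comparators_suffice
    (n t : ℕ) (h1 : 2 * n ≤ 3 * t) (h2 : t ≤ n) :
    ∃ S₁ S₂ S₃ : Finset (Fin n),
      S₁.card ≤ t ∧ S₂.card ≤ t ∧ S₃.card ≤ t ∧
      ∀ a b : Fin n, a ≠ b →
        (a ∈ S₁ ∧ b ∈ S₁) ∨ (a ∈ S₂ ∧ b ∈ S₂) ∨ (a ∈ S₃ ∧ b ∈ S₃) := by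
  set k := n - t with hk
  refine ⟨Finset.univ.filter (fun i => k ≤ i.val),
          Finset.univ.filter (fun i => i.val < k ∨ 2 * k ≤ i.val),
          Finset.univ.filter (fun i => i.val < 2 * k), ?_, ?_, ?_, ?_⟩
  · rw [card_filter_val n (fun x => k ≤ x)]
    have : (Finset.range n).filter (fun x => k ≤ x) = Finset.Ico k n := by
      ext x; simp [Finset.mem_Ico]; omega
    rw [this, Nat.card_Ico]; omega
  · rw [card_filter_val n (fun x => x < k ∨ 2 * k ≤ x)]
    have : (Finset.range n).filter (fun x => x < k ∨ 2 * k ≤ x)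
        = Finset.range k ∪ Finset.Ico (2 * k) n := by
      ext x; simp [Finset.mem_Ico]; omega
    rw [this]
    calc (Finset.range k ∪ Finset.Ico (2 * k) n).card
        ≤ (Finset.range k).card + (Finset.Ico (2 * k) n).card :=
          Finset.card_union_le _ _
      _ = k + (n - 2 * k) := by rw [Finset.card_range, Nat.card_Ico]
      _ ≤ t := by omega
  · rw [card_filter_val n (fun x => x < 2 * k)]
    have : (Finset.range n).filter (fun x => x < 2 * k)
        = Finset.range (min (2 * k) n) := by
      ext x; simp; omega
    rw [this, Finset.card_range]; omega
  · intro a b _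
    simp only [Finset.mem_filter, Finset.mem_univ, true_and]
    omega
end

section
/- Let n, t be natural numbers with 2 ≤ t < n and 2*n ≤ 3*t. Then: (a) there exists a finite family F of subsets of Fin n with F.card = 3, each member of cardinality at most t, such that every pair of distinct elements of Fin n is contained in some member of F; and (b) every finite family F of subsets of Fin n whose members all have cardinality at most t and for which every pair of distinct elements of Fin n is contained in some member satisfies F.card ≥ 3. -/
/-- For `(2/3) n ≤ t < n` (with `t ≥ 2`), the optimal one-round sorting of `n`
elements with `t`-comparators uses exactly three comparators: three suffice,
and every covering family has at least three members. -/
theorem optimal_one_round_three_comparators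
    (n t : ℕ) (ht2 : 2 ≤ t) (htn : t < n) (h23 : 2 * n ≤ 3 * t) :
    (∃ F : Finset (Finset (Fin n)),
      F.card = 3 ∧
      (∀ S ∈ F, S.card ≤ t) ∧
      (∀ a b : Fin n, a ≠ b → ∃ S ∈ F, a ∈ S ∧ b ∈ S)) ∧
    (∀ F : Finset (Finset (Fin n)),
      (∀ S ∈ F, S.card ≤ t) →
      (∀ a b : Fin n, a ≠ b → ∃ S ∈ F, a ∈ S ∧ b ∈ S) →
      3 ≤ F.card) := by
  have hn3 : 3 ≤ n := by omega
  have hcardn : Fintype.card (Fin n) = n := Fintype.card_fin n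
  constructor
  · -- construction
    set a : ℕ := n - t with ha
    have ha1 : 1 ≤ a := by omega
    have han : a < n := by omega
    have h2an : 2 * a < n := by omega
    have h2at : 2 * a ≤ t := by omega
    set A : Fin n := ⟨a, han⟩ with hA
    set B : Fin n := ⟨2 * a, h2an⟩ with hB
    have hAB : A < B := by
      simp only [Fin.lt_def, hA, hB]; omega
    set S1 : Finset (Fin n) := Finset.Ici A with hS1
    set S2 : Finset (Fin n) := Finset.Iio A ∪ Finset.Ici B with hS2
    set S3 : Finset (Fin n) := Finset.Iio B with hS3
    refine ⟨{S1, S2, S3}, ?_, ?_, ?_⟩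
    · have hAS1 : A ∈ S1 := Finset.mem_Ici.mpr le_rfl
      have hAS2 : A ∉ S2 := by
        simp only [hS2, Finset.mem_union, Finset.mem_Iio, Finset.mem_Ici]
        push_neg
        exact ⟨le_refl A, hAB⟩
      have hBS1 : B ∈ S1 := Finset.mem_Ici.mpr hAB.le
      have hBS3 : B ∉ S3 := by simp [hS3]
      have hAS3 : A ∈ S3 := Finset.mem_Iio.mpr hAB
      have h12 : S1 ≠ S2 := fun h => hAS2 (h ▸ hAS1)
      have h13 : S1 ≠ S3 := fun h => hBS3 (h ▸ hBS1)
      have h23' : S2 ≠ S3 := fun h => hAS2 (h.symm ▸ hAS3)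
      rw [Finset.card_insert_of_notMem (by simp [h12, h13]),
        Finset.card_insert_of_notMem (by simp [h23']), Finset.card_singleton]
    · intro S hS
      simp only [Finset.mem_insert, Finset.mem_singleton] at hS
      rcases hS with rfl | rfl | rfl
      · rw [hS1, Fin.card_Ici]; simp only [hA]; omega
      · refine (Finset.card_union_le _ _).trans ?_
        rw [Fin.card_Iio, Fin.card_Ici]
        simp only [hA, hB]; omega
      · rw [hS3, Fin.card_Iio]; simp only [hB]; omega
    · intro x y hxy
      by_cases hx1 : A ≤ x ∧ A ≤ y
      · exact ⟨S1, by simp, Finset.mem_Ici.mpr hx1.1, Finset.mem_Ici.mpr hx1.2⟩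
      by_cases hx3 : x < B ∧ y < B
      · exact ⟨S3, by simp, Finset.mem_Iio.mpr hx3.1, Finset.mem_Iio.mpr hx3.2⟩
      push_neg at hx1 hx3
      have hc1 : x < A ∨ y < A := by
        rcases lt_or_ge x A with h | h
        · exact Or.inl h
        · exact Or.inr (hx1 h)
      have hc2 : B ≤ x ∨ B ≤ y := by
        rcases lt_or_ge x B with h | h
        · exact Or.inr (hx3 h)
        · exact Or.inl h
      refine ⟨S2, by simp, ?_, ?_⟩ <;>
        simp only [hS2, Finset.mem_union, Finset.mem_Iio, Finset.mem_Ici]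
      · rcases hc1 with h | h
        · exact Or.inl h
        · rcases hc2 with h' | h'
          · exact Or.inr h'
          · exact absurd (h.trans hAB) (not_lt.mpr h')
      · rcases hc1 with h | h
        · rcases hc2 with h' | h'
          · exact absurd (h.trans hAB) (not_lt.mpr h')
          · exact Or.inr h'
        · exact Or.inl h
  · -- lower bound
    intro F hcard hcov
    by_contra hlt
    push_neg at hlt
    have key : ∀ S ∈ F, ∃ x : Fin n, x ∉ S := by
      intro S hS
      have : Sᶜ.Nonempty := by
        rw [← Finset.card_pos, Finset.card_compl, hcardn]
        have := hcard S hS; omega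
      obtain ⟨x, hx⟩ := this
      exact ⟨x, Finset.mem_compl.mp hx⟩
    have hnt : Nontrivial (Fin n) := by
      apply Fin.nontrivial_iff_two_le.mpr; omega
    interval_cases h : F.card
    · obtain ⟨x, y, hxy⟩ := exists_pair_ne (Fin n)
      obtain ⟨S, hS, -⟩ := hcov x y hxy
      rw [Finset.card_eq_zero] at h
      simp [h] at hS
    · obtain ⟨S, hF⟩ := Finset.card_eq_one.mp h
      obtain ⟨x, hx⟩ := key S (by simp [hF])
      obtain ⟨y, hy⟩ := exists_ne x
      obtain ⟨U, hU, hxU, -⟩ := hcov x y (Ne.symm hy)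
      rw [hF, Finset.mem_singleton] at hU
      exact hx (hU ▸ hxU)
    · obtain ⟨S, T, hST, hF⟩ := Finset.card_eq_two.mp h
      obtain ⟨x, hx⟩ := key S (by simp [hF])
      obtain ⟨y, hy⟩ := key T (by simp [hF])
      by_cases hxy : x = y
      · subst hxy
        obtain ⟨z, hz⟩ := exists_ne x
        obtain ⟨U, hU, hxU, -⟩ := hcov x z (Ne.symm hz)
        rw [hF, Finset.mem_insert, Finset.mem_singleton] at hU
        rcases hU with rfl | rfl
        · exact hx hxU
        · exact hy hxU
      · obtain ⟨U, hU, hxU, hyU⟩ := hcov x y hxy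
        rw [hF, Finset.mem_insert, Finset.mem_singleton] at hU
        rcases hU with rfl | rfl
        · exact hx hxU
        · exact hy hyU
end

section
/- Define g : ℝ → ℝ by g x = Real.sqrt (2 * x * Real.logb 2 x). For every real number α ≥ 5 and every natural number b, the finite sum ∑_{j=0}^{b−1} g(α * 2^j) / 2^j is at most 10 * Real.sqrt (α * Real.logb 2 α). -/
lemma aux_linear_le_geom : ∀ j : ℕ, (1 + j : ℝ) ≤ 1.96 * (32/25) ^ j := by
  have key : ∀ j : ℕ, 3 ≤ j → (1 + j : ℝ) ≤ 1.96 * (32/25) ^ j := by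
    intro j hj
    induction j, hj using Nat.le_induction with
    | base => norm_num
    | succ n hn ih =>
      have hpow : ((32:ℝ)/25) ^ 3 ≤ (32/25) ^ n :=
        pow_le_pow_right₀ (by norm_num) hn
      push_cast
      rw [pow_succ]
      push_cast at ih
      nlinarith [hpow]
  intro j
  match j with
  | 0 => norm_num
  | 1 => norm_num
  | 2 => norm_num
  | (n+3) => exact key (n+3) (by omega)

/-- The summation bound from the proof of Lemma 4.5: with
`g x = √(2 x log₂ x)`, for every `α ≥ 5` and every `b`,
`∑_{j<b} g(α·2^j)/2^j ≤ 10 √(α log₂ α)`. -/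
theorem sum_g_bound
    (g : ℝ → ℝ) (hg : ∀ x, g x = Real.sqrt (2 * x * Real.logb 2 x))
    (α : ℝ) (hα : 5 ≤ α) (b : ℕ) :
    ∑ j ∈ Finset.range b, g (α * 2 ^ j) / 2 ^ j
      ≤ 10 * Real.sqrt (α * Real.logb 2 α) := by
  have hα0 : (0:ℝ) < α := by linarith
  set L := Real.logb 2 α with hLdef
  have hL2 : (2:ℝ) ≤ L := by
    have h4 : Real.logb 2 4 ≤ L :=
      Real.logb_le_logb_of_le (by norm_num) (by norm_num) (by linarith)
    have : Real.logb 2 4 = 2 := by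
      rw [show (4:ℝ) = 2 ^ (2:ℕ) by norm_num, Real.logb_pow,
        Real.logb_self_eq_one (by norm_num)]
      norm_num
    linarith
  -- per-term bound
  have hterm : ∀ j ∈ Finset.range b,
      g (α * 2 ^ j) / 2 ^ j ≤ Real.sqrt (2 * α * L) * (1.4 * (4/5 : ℝ) ^ j) := by
    intro j _
    have h2j : (0:ℝ) < 2 ^ j := by positivity
    rw [hg, div_le_iff₀ h2j]
    have hlog : Real.logb 2 (α * 2 ^ j) = L + j := by
      rw [Real.logb_mul (ne_of_gt hα0) (ne_of_gt h2j), Real.logb_pow,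
        Real.logb_self_eq_one (by norm_num)]
      ring
    rw [hlog]
    -- RHS rewrite: √(2αL)·1.4·(4/5)^j·2^j = √(2αL·1.96·(64/25)^j)
    have hLpos : (0:ℝ) < L := by linarith
    have hrhs : Real.sqrt (2 * α * L) * (1.4 * (4/5 : ℝ) ^ j) * 2 ^ j
        = Real.sqrt (2 * α * L * (1.96 * (64/25) ^ j)) := by
      have h1 : Real.sqrt (1.96 * (64/25 : ℝ) ^ j) = 1.4 * (8/5 : ℝ) ^ j := by
        rw [show (1.96 * (64/25 : ℝ) ^ j) = (1.4 * (8/5 : ℝ) ^ j) ^ 2 by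
          rw [mul_pow, ← pow_mul, mul_comm j 2, pow_mul]; norm_num]
        exact Real.sqrt_sq (by positivity)
      have hmul : (4/5 : ℝ) ^ j * 2 ^ j = (8/5 : ℝ) ^ j := by
        rw [← mul_pow]; norm_num
      rw [Real.sqrt_mul (show (0:ℝ) ≤ 2 * α * L by positivity), h1, ← hmul]
      ring
    rw [hrhs]
    apply Real.sqrt_le_sqrt
    -- 2·(α·2^j)·(L+j) ≤ 2αL·1.96·(64/25)^j
    have hlin : (1 + j : ℝ) ≤ 1.96 * (32/25) ^ j := aux_linear_le_geom j
    have hLj : L + j ≤ L * (1 + j) := by nlinarith [Nat.cast_nonneg (α := ℝ) j]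
    have h64 : ((64:ℝ)/25) ^ j = (32/25) ^ j * 2 ^ j := by
      rw [← mul_pow]; norm_num
    have step1 : 2 * (α * 2 ^ j) * (L + j) ≤ 2 * α * 2 ^ j * (L * (1 + j)) := by
      have : (0:ℝ) ≤ 2 * α * 2 ^ j := by positivity
      nlinarith
    have step2 : 2 * α * 2 ^ j * (L * (1 + j)) ≤ 2 * α * L * (1.96 * (64/25) ^ j) := by
      rw [h64]
      have h0 : (0:ℝ) ≤ 2 * α * L * 2 ^ j := by positivity
      nlinarith [hlin]
    linarith
  calc ∑ j ∈ Finset.range b, g (α * 2 ^ j) / 2 ^ j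
      ≤ ∑ j ∈ Finset.range b, Real.sqrt (2 * α * L) * (1.4 * (4/5 : ℝ) ^ j) :=
        Finset.sum_le_sum hterm
    _ = Real.sqrt (2 * α * L) * 1.4 * ∑ j ∈ Finset.range b, (4/5 : ℝ) ^ j := by
        rw [Finset.mul_sum]; apply Finset.sum_congr rfl; intros; ring
    _ ≤ Real.sqrt (2 * α * L) * 1.4 * 5 := by
        have hsum : ∑ j ∈ Finset.range b, (4/5 : ℝ) ^ j ≤ 5 := by
          have := geom_sum_eq (show (4/5:ℝ) ≠ 1 by norm_num) b
          rw [this]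
          have hp : (0:ℝ) ≤ (4/5:ℝ) ^ b := by positivity
          have hp1 : (4/5:ℝ) ^ b ≤ 1 := pow_le_one₀ (by norm_num) (by norm_num)
          rw [div_le_iff_of_neg (by norm_num : (4/5:ℝ) - 1 < 0)]
          linarith
        have h0 : (0:ℝ) ≤ Real.sqrt (2 * α * L) * 1.4 := by positivity
        nlinarith [hsum]
    _ ≤ 10 * Real.sqrt (α * L) := by
        rw [show 2 * α * L = 2 * (α * L) by ring,
          Real.sqrt_mul (by norm_num : (0:ℝ) ≤ 2)]
        have hs2 : Real.sqrt 2 ≤ 1.42 := by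
          rw [show (1.42:ℝ) = Real.sqrt (1.42^2) by
            rw [Real.sqrt_sq]; norm_num]
          exact Real.sqrt_le_sqrt (by norm_num)
        have h0 : (0:ℝ) ≤ Real.sqrt (α * L) := Real.sqrt_nonneg _
        nlinarith [Real.sqrt_nonneg (2:ℝ)]
end

section
/- Define g : ℝ → ℝ by g x = Real.sqrt (2 * x * Real.logb 2 x). Let b ≥ 1 be a natural number and let ℓ : ℕ → ℝ be a sequence satisfying ℓ 0 ≥ 10000 * 2^(b−1) and, for every i < b, ℓ (i+1) ≥ ℓ i / 2 − g (ℓ i). Then ℓ b ≥ 1. -/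
private lemma my_le_of_sq_le (a b : ℝ) (ha : 0 ≤ a) (hb : 0 ≤ b) (h : a^2 ≤ b^2) : a ≤ b := by
  calc a = Real.sqrt (a^2) := (Real.sqrt_sq ha).symm
    _ ≤ Real.sqrt (b^2) := Real.sqrt_le_sqrt h
    _ = b := Real.sqrt_sq hb

private noncomputable def uu (k : ℕ) : ℝ := Real.sqrt (2^k * (k + 16))

private lemma uu_nonneg (k : ℕ) : 0 ≤ uu k := Real.sqrt_nonneg _

private lemma uu_sq (k : ℕ) : (uu k)^2 = 2^k * (k + 16) := by
  apply Real.sq_sqrt; positivity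

private lemma uu_zero : uu 0 = 4 := by
  unfold uu
  rw [show ((2:ℝ)^0 * ((0:ℕ) + 16)) = 4^2 by norm_num]
  exact Real.sqrt_sq (by norm_num)

private lemma k_le_pow (k : ℕ) : ((k:ℝ) + 17) ≤ 17 * 2^k := by
  induction k with
  | zero => norm_num
  | succ n ih =>
    have h2 : (1:ℝ) ≤ 2^n := one_le_pow₀ (by norm_num)
    have h3 : (2:ℝ)^(n+1) = 2 * 2^n := by ring
    push_cast
    push_cast at ih
    nlinarith

private lemma uu_le_six (k : ℕ) : uu (k+1) ≤ 6 * 2^k := by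
  apply my_le_of_sq_le _ _ (uu_nonneg _) (by positivity)
  rw [uu_sq]
  have := k_le_pow k
  have h2 : (0:ℝ) < 2^k := by positivity
  have h3 : (2:ℝ)^(k+1) = 2 * 2^k := by ring
  push_cast
  nlinarith

private lemma uu_succ_le (k : ℕ) : uu (k+1) ≤ 1.46 * uu k := by
  apply my_le_of_sq_le _ _ (uu_nonneg _) (mul_nonneg (by norm_num) (uu_nonneg k))
  have h := uu_sq k
  have h1 := uu_sq (k+1)
  have h2 : (0:ℝ) < 2^k := by positivity
  have hk : (0:ℝ) ≤ (k:ℝ) := Nat.cast_nonneg k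
  rw [mul_pow, h1, h]
  push_cast
  ring_nf
  nlinarith

private lemma logb_le_three_sqrt (x : ℝ) (hx : 1 ≤ x) : Real.logb 2 x ≤ 3 * Real.sqrt x := by
  have hxpos : (0:ℝ) < x := by linarith
  have hs : 0 < Real.sqrt x := Real.sqrt_pos.2 hxpos
  have hlog2 : (0.6931471803:ℝ) < Real.log 2 := Real.log_two_gt_d9
  have h1 : Real.log (Real.sqrt x) ≤ Real.sqrt x - 1 := Real.log_le_sub_one_of_pos hs
  have h2 : Real.log (Real.sqrt x) = Real.log x / 2 := Real.log_sqrt hxpos.le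
  rw [Real.logb, div_le_iff₀ (by linarith : (0:ℝ) < Real.log 2)]
  nlinarith

/-- The key single-step estimate. -/
private lemma step_lemma (k : ℕ) (x y : ℝ)
    (hx : x ≥ 5000 * 2^(k+1) - 1000 * uu (k+1))
    (hy : y ≥ x / 2 - Real.sqrt (2 * x * Real.logb 2 x)) :
    y ≥ 5000 * 2^k - 1000 * uu k := by
  have h2 : (1:ℝ) ≤ 2^k := one_le_pow₀ (by norm_num)
  have h2p : (0:ℝ) < 2^k := by linarith
  have hx4 : x ≥ 4000 * 2^k := by
    have h6 := uu_le_six k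
    have : (2:ℝ)^(k+1) = 2 * 2^k := by ring
    nlinarith
  have hx1 : (1:ℝ) ≤ x := by nlinarith
  have hlogpos : 0 ≤ Real.logb 2 x := Real.logb_nonneg (by norm_num) hx1
  set G := Real.sqrt (2 * x * Real.logb 2 x) with hG
  have hG0 : 0 ≤ G := Real.sqrt_nonneg _
  by_cases hcase : x ≥ 20000 * 2^k
  · -- large case : G ≤ x/4
    have hsx : (96:ℝ) ≤ Real.sqrt x := by
      have : (96:ℝ)^2 ≤ x := by nlinarith
      calc (96:ℝ) = Real.sqrt (96^2) := (Real.sqrt_sq (by norm_num)).symm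
        _ ≤ Real.sqrt x := Real.sqrt_le_sqrt this
    have hsx2 : Real.sqrt x ^ 2 = x := Real.sq_sqrt (by linarith)
    have hlog := logb_le_three_sqrt x hx1
    have hGle : G ≤ x / 4 := by
      apply my_le_of_sq_le _ _ hG0 (by linarith)
      rw [hG, Real.sq_sqrt (by positivity)]
      have h5 : (0:ℝ) ≤ x * Real.sqrt x := by positivity
      have h6 := mul_le_mul_of_nonneg_left hsx h5
      nlinarith [mul_le_mul_of_nonneg_left hlog (by linarith : (0:ℝ) ≤ 2*x)]
    have := uu_nonneg k
    nlinarith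
  · -- small case : x ≤ 20000 * 2^k
    push_neg at hcase
    have hlog : Real.logb 2 x ≤ (k:ℝ) + 15 := by
      have hx2 : x ≤ 2^(k+15) := by
        have : (2:ℝ)^(k+15) = 2^k * 2^15 := by ring
        rw [this]; norm_num; nlinarith
      calc Real.logb 2 x ≤ Real.logb 2 ((2:ℝ)^(k+15)) :=
            Real.logb_le_logb_of_le (by norm_num) (by linarith) hx2
        _ = (k:ℝ) + 15 := by
            rw [Real.logb_pow, Real.logb_self_eq_one (by norm_num)]
            push_cast; ring
    have hGle : G ≤ 270 * uu k := by
      apply my_le_of_sq_le _ _ hG0 (mul_nonneg (by norm_num) (uu_nonneg k))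
      rw [hG, Real.sq_sqrt (by positivity), mul_pow, uu_sq]
      nlinarith
    have husucc := uu_succ_le k
    have h2' : (2:ℝ)^(k+1) = 2 * 2^k := by ring
    rw [h2'] at hx
    nlinarith

/-- Lemma 4.5 of the paper (with an explicit safe constant): if `ℓ 0` is large
enough and at each of the `b` steps at most `ℓ i / 2 − g (ℓ i)` balls are lost,
where `g x = √(2 x log₂ x)`, then at least one ball reaches the leaf. -/
theorem ball_reaches_leaf
    (g : ℝ → ℝ) (hg : ∀ x, g x = Real.sqrt (2 * x * Real.logb 2 x))
    (b : ℕ) (hb : 1 ≤ b) (ℓ : ℕ → ℝ)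
    (h0 : ℓ 0 ≥ 10000 * 2 ^ (b - 1))
    (hstep : ∀ i < b, ℓ (i + 1) ≥ ℓ i / 2 - g (ℓ i)) :
    ℓ b ≥ 1 := by
  have key : ∀ j, j ≤ b → ℓ j ≥ 5000 * 2^(b-j) - 1000 * uu (b-j) := by
    intro j
    induction j with
    | zero =>
      intro _
      have hbb : (b - 1) + 1 = b := by omega
      have : (10000:ℝ) * 2^(b-1) = 5000 * 2^((b-1)+1) := by ring
      rw [hbb] at this
      have := uu_nonneg (b - 0)
      simp only [Nat.sub_zero] at *
      nlinarith [h0]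
    | succ j ih =>
      intro hj
      have hjb : j < b := hj
      have hk : (b - j) = (b - (j+1)) + 1 := by omega
      have hx := ih (le_of_lt hjb)
      rw [hk] at hx
      have hy := hstep j hjb
      rw [hg] at hy
      exact step_lemma (b - (j+1)) (ℓ j) (ℓ (j+1)) hx hy
  have := key b le_rfl
  simp only [Nat.sub_self] at this
  rw [uu_zero] at this
  norm_num at this
  linarith
end

section
/- Let ℓ ≥ 1 be a natural number and let X be the sum of ℓ independent Bernoulli(1/2) random variables (equivalently, X is binomially distributed with parameters ℓ and 1/2). Then the probability that X ≤ ℓ/2 − Real.sqrt (2 * ℓ * Real.logb 2 ℓ) is at most 1/ℓ^2. -/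
open Real Finset
open scoped ENNReal

lemma binom_half_apply (ℓ : ℕ) (k : Fin (ℓ + 1)) :
    PMF.binomial (1 / 2) (by norm_num) ℓ k
      = ENNReal.ofReal ((ℓ.choose k) * (1 / 2 : ℝ) ^ ℓ) := by
  rw [PMF.binomial_apply]
  have h0 : ((1 / 2 : NNReal) : ℝ≥0∞) = 1 / 2 := by
    rw [ENNReal.coe_div two_ne_zero, ENNReal.coe_one, ENNReal.coe_ofNat]
  rw [h0]
  have h1 : (1 : ℝ≥0∞) - 1 / 2 = 1 / 2 := by
    simpa using ENNReal.sub_half (a := 1) one_ne_top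
  rw [h1, Fin.val_last, ← pow_add,
    Nat.add_sub_cancel' (Nat.le_of_lt_succ k.isLt)]
  rw [ENNReal.ofReal_mul (by positivity), ENNReal.ofReal_pow (by norm_num),
    ENNReal.ofReal_natCast]
  rw [show ENNReal.ofReal ((1:ℝ)/2) = 1/2 by
    rw [ENNReal.ofReal_div_of_pos (by norm_num)]; norm_num]
  ring

lemma key_real_bound (ℓ : ℕ) (hℓ : 1 ≤ ℓ) :
    ∑ k ∈ Finset.range (ℓ + 1), (ℓ.choose k : ℝ) * (1 / 2 : ℝ) ^ ℓ *
      Real.exp ((4 * Real.sqrt (2 * ℓ * Real.logb 2 ℓ) / ℓ) *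
        (((ℓ : ℝ) / 2 - Real.sqrt (2 * ℓ * Real.logb 2 ℓ)) - k))
      ≤ 1 / (ℓ : ℝ) ^ 2 := by
  have hℓ0 : (0 : ℝ) < ℓ := by exact_mod_cast hℓ
  have hℓ1 : (1 : ℝ) ≤ ℓ := by exact_mod_cast hℓ
  have hlog : 0 ≤ Real.logb 2 ℓ := Real.logb_nonneg (by norm_num) hℓ1
  set t : ℝ := Real.sqrt (2 * ℓ * Real.logb 2 ℓ) with ht_def
  have ht : 0 ≤ t := Real.sqrt_nonneg _
  have ht2 : t ^ 2 = 2 * ℓ * Real.logb 2 ℓ := Real.sq_sqrt (by positivity)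
  set lam : ℝ := 4 * t / ℓ with hlam_def
  set c : ℝ := (ℓ : ℝ) / 2 - t with hc_def
  have step1 : ∑ k ∈ Finset.range (ℓ + 1), (ℓ.choose k : ℝ) * (1 / 2 : ℝ) ^ ℓ *
      Real.exp (lam * (c - k))
      = (1 / 2 : ℝ) ^ ℓ * Real.exp (lam * c) * (Real.exp (-lam) + 1) ^ ℓ := by
    rw [add_pow, Finset.mul_sum]
    refine Finset.sum_congr rfl fun k _ => ?_
    have : Real.exp (lam * (c - k)) = Real.exp (lam * c) * Real.exp (-lam) ^ k := by
      rw [← Real.exp_nat_mul, ← Real.exp_add]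
      ring_nf
    rw [this, one_pow]; ring
  have step2 : Real.exp (-lam) + 1 = 2 * Real.exp (-lam / 2) * Real.cosh (lam / 2) := by
    have e1 : Real.exp (-lam / 2) * Real.exp (lam / 2) = 1 := by
      rw [← Real.exp_add, show (-lam / 2 + lam / 2 : ℝ) = 0 by ring, Real.exp_zero]
    have e2 : Real.exp (-lam / 2) * Real.exp (-lam / 2) = Real.exp (-lam) := by
      rw [← Real.exp_add, show (-lam / 2 + -lam / 2 : ℝ) = -lam by ring]
    rw [Real.cosh_eq]
    have : -(lam / 2) = -lam / 2 := by ring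
    rw [this]
    nlinarith [e1, e2]
  have step3 : (1 / 2 : ℝ) ^ ℓ * Real.exp (lam * c) * (Real.exp (-lam) + 1) ^ ℓ
      ≤ Real.exp (lam * c) * (Real.exp (-lam / 2) * Real.exp (lam ^ 2 / 8)) ^ ℓ := by
    rw [step2]
    have hcosh : Real.cosh (lam / 2) ≤ Real.exp (lam ^ 2 / 8) := by
      have := Real.cosh_le_exp_half_sq (lam / 2)
      have h8 : (lam / 2) ^ 2 / 2 = lam ^ 2 / 8 := by ring
      rwa [h8] at this
    have hh : (2 * Real.exp (-lam / 2) * Real.cosh (lam / 2)) ^ ℓ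
        ≤ (2 * (Real.exp (-lam / 2) * Real.exp (lam ^ 2 / 8))) ^ ℓ := by
      apply pow_le_pow_left₀ (by positivity)
      have := Real.cosh_pos (x := lam / 2)
      nlinarith [Real.exp_pos (-lam / 2)]
    calc (1 / 2 : ℝ) ^ ℓ * Real.exp (lam * c) *
          (2 * Real.exp (-lam / 2) * Real.cosh (lam / 2)) ^ ℓ
        ≤ (1 / 2 : ℝ) ^ ℓ * Real.exp (lam * c) *
          (2 * (Real.exp (-lam / 2) * Real.exp (lam ^ 2 / 8))) ^ ℓ := by
          apply mul_le_mul_of_nonneg_left hh (by positivity)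
      _ = Real.exp (lam * c) * (Real.exp (-lam / 2) * Real.exp (lam ^ 2 / 8)) ^ ℓ := by
          rw [mul_pow 2, ← mul_assoc]
          rw [show (1 / 2 : ℝ) ^ ℓ * Real.exp (lam * c) * 2 ^ ℓ
            = Real.exp (lam * c) * ((1 / 2 : ℝ) * 2) ^ ℓ by rw [mul_pow]; ring]
          norm_num
  have step4 : Real.exp (lam * c) * (Real.exp (-lam / 2) * Real.exp (lam ^ 2 / 8)) ^ ℓ
      = Real.exp (-4 * Real.logb 2 ℓ) := by
    rw [← Real.exp_add, ← Real.exp_nat_mul, ← Real.exp_add]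
    congr 1
    have hE : lam * c + ℓ * (-lam / 2 + lam ^ 2 / 8) = -2 * t ^ 2 / ℓ := by
      rw [hlam_def, hc_def]; field_simp; ring
    rw [hE, ht2]; field_simp; ring
  have step5 : Real.exp (-4 * Real.logb 2 ℓ) ≤ 1 / (ℓ : ℝ) ^ 2 := by
    have h2 : (1 : ℝ) / (ℓ : ℝ) ^ 2 = Real.exp (-(2 * Real.log ℓ)) := by
      rw [show (2 * Real.log (ℓ:ℝ)) = Real.log ((ℓ:ℝ) ^ 2) by
            rw [Real.log_pow]; push_cast; ring,
          Real.exp_neg, Real.exp_log (by positivity), one_div]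
    rw [h2]
    apply Real.exp_le_exp.2
    have hln : 0 ≤ Real.log ℓ := Real.log_nonneg hℓ1
    rw [Real.logb]
    have hl2 : 0 < Real.log 2 := Real.log_pos (by norm_num)
    have hl2' : Real.log 2 < 1 := by
      have := Real.log_two_lt_d9; linarith
    rw [div_eq_mul_inv]
    have : (1:ℝ) ≤ (Real.log 2)⁻¹ := by
      rw [le_inv_comm₀] <;> simp_all <;> linarith
    nlinarith
  calc ∑ k ∈ Finset.range (ℓ + 1), (ℓ.choose k : ℝ) * (1 / 2 : ℝ) ^ ℓ *
        Real.exp (lam * (c - k))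
      = (1 / 2 : ℝ) ^ ℓ * Real.exp (lam * c) * (Real.exp (-lam) + 1) ^ ℓ := step1
    _ ≤ Real.exp (lam * c) * (Real.exp (-lam / 2) * Real.exp (lam ^ 2 / 8)) ^ ℓ := step3
    _ = Real.exp (-4 * Real.logb 2 ℓ) := step4
    _ ≤ 1 / (ℓ : ℝ) ^ 2 := step5

/-- Lemma 4.8 of the paper: if `X` is binomial with parameters `ℓ ≥ 1` and
`1/2`, then `Pr[X ≤ ℓ/2 − √(2 ℓ log₂ ℓ)] ≤ 1/ℓ²`. -/
theorem binomial_lower_tail_bound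
    (ℓ : ℕ) (hℓ : 1 ≤ ℓ) :
    (PMF.binomial (1 / 2) (by norm_num) ℓ).toMeasure
        {k : Fin (ℓ + 1) |
          (k : ℝ) ≤ (ℓ : ℝ) / 2 - Real.sqrt (2 * ℓ * Real.logb 2 ℓ)}
      ≤ 1 / (ℓ : ENNReal) ^ 2 := by
  set s : Set (Fin (ℓ + 1)) :=
    {k : Fin (ℓ + 1) | (k : ℝ) ≤ (ℓ : ℝ) / 2 - Real.sqrt (2 * ℓ * Real.logb 2 ℓ)} with hs
  set lam : ℝ := 4 * Real.sqrt (2 * ℓ * Real.logb 2 ℓ) / ℓ with hlam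
  set c : ℝ := (ℓ : ℝ) / 2 - Real.sqrt (2 * ℓ * Real.logb 2 ℓ) with hc
  have hlam0 : 0 ≤ lam := by
    have : (0:ℝ) < ℓ := by exact_mod_cast hℓ
    positivity
  have g : ℕ → ℝ := fun k => (ℓ.choose k : ℝ) * (1 / 2 : ℝ) ^ ℓ * Real.exp (lam * (c - k))
  rw [PMF.toMeasure_apply_fintype]
  calc ∑ k : Fin (ℓ + 1), s.indicator (⇑(PMF.binomial (1 / 2) (by norm_num) ℓ)) k
      ≤ ∑ k : Fin (ℓ + 1), ENNReal.ofReal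
          ((ℓ.choose k : ℝ) * (1 / 2 : ℝ) ^ ℓ * Real.exp (lam * (c - (k : ℕ)))) := by
        apply Finset.sum_le_sum
        intro k _
        by_cases hk : k ∈ s
        · rw [Set.indicator_of_mem hk, binom_half_apply]
          apply ENNReal.ofReal_le_ofReal
          have hck : (k : ℝ) ≤ c := hk
          have h1 : 1 ≤ Real.exp (lam * (c - (k : ℕ))) := by
            apply Real.one_le_exp
            apply mul_nonneg hlam0
            have : ((k : ℕ) : ℝ) = (k : ℝ) := rfl
            rw [this]; linarith
          have hnn : (0:ℝ) ≤ (ℓ.choose k : ℝ) * (1 / 2 : ℝ) ^ ℓ := by positivity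
          nlinarith
        · rw [Set.indicator_of_notMem hk]; exact zero_le
    _ = ENNReal.ofReal (∑ k : Fin (ℓ + 1),
          ((ℓ.choose k : ℝ) * (1 / 2 : ℝ) ^ ℓ * Real.exp (lam * (c - (k : ℕ))))) := by
        rw [ENNReal.ofReal_sum_of_nonneg]
        intro k _; positivity
    _ = ENNReal.ofReal (∑ k ∈ Finset.range (ℓ + 1),
          ((ℓ.choose k : ℝ) * (1 / 2 : ℝ) ^ ℓ * Real.exp (lam * (c - k)))) := by
        congr 1
        exact Fin.sum_univ_eq_sum_range
          (fun k => (ℓ.choose k : ℝ) * (1 / 2 : ℝ) ^ ℓ * Real.exp (lam * (c - k))) (ℓ + 1)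
    _ ≤ ENNReal.ofReal (1 / (ℓ : ℝ) ^ 2) :=
        ENNReal.ofReal_le_ofReal (key_real_bound ℓ hℓ)
    _ = 1 / (ℓ : ENNReal) ^ 2 := by
        have hℓ0 : (0:ℝ) < (ℓ:ℝ) ^ 2 := by
          have : (0:ℝ) < ℓ := by exact_mod_cast hℓ
          positivity
        rw [ENNReal.ofReal_div_of_pos hℓ0, ENNReal.ofReal_one, ENNReal.ofReal_pow (by positivity),
          ENNReal.ofReal_natCast]
end
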